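/- Let H(l) be a differentiable family of Hermitian matrices satisfying the Wegner flow dH/dl = [[H_T, H], H], where H_T(l) = Σ_n H_{nn}(l)|n⟩⟨n| is the diagonal part of H(l) in a fixed orthonormal basis. Then the off-diagonal Hilbert–Schmidt norm satisfies d/dl Σ_{n≠m} |H_{nm}|² = −2 Σ_{n,m} (H_{nn} − H_{mm})² |H_{nm}|² ≤ 0. -/

import Mathlib

open Matrix

attribute [local instance] Matrix.normedAddCommGroup Matrix.normedSpace

private lemma entry_hasDerivAt' {N : ℕ} {H : ℝ → Matrix (Fin N) (Fin N) ℂ}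
    {D : Matrix (Fin N) (Fin N) ℂ} {l : ℝ} (h : HasDerivAt H D l) (n m : Fin N) :
    HasDerivAt (fun s => H s n m) (D n m) l := by
  let L : Matrix (Fin N) (Fin N) ℂ →ₗ[ℝ] ℂ :=
    { toFun := fun A => A n m, map_add' := fun _ _ => rfl, map_smul' := fun _ _ => rfl }
  exact (L.toContinuousLinearMap.hasFDerivAt.comp_hasDerivAt l h : )

private lemma normsq_hasDerivAt' {f : ℝ → ℂ} {f' : ℂ} {l : ℝ} (h : HasDerivAt f f' l) :
    HasDerivAt (fun s => ‖f s‖ ^ 2) (2 * ((starRingEnd ℂ) (f l) * f').re) l := by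
  have hre : HasDerivAt (fun s => (f s).re) f'.re l :=
    (Complex.reCLM.hasFDerivAt.comp_hasDerivAt l h : )
  have him : HasDerivAt (fun s => (f s).im) f'.im l :=
    (Complex.imCLM.hasFDerivAt.comp_hasDerivAt l h : )
  have hd := ((hre.pow 2).add (him.pow 2))
  have heq : (fun s => ‖f s‖ ^ 2) = fun s => (f s).re ^ 2 + (f s).im ^ 2 := by
    funext s
    rw [← Complex.normSq_eq_norm_sq, Complex.normSq_apply]
    ring
  rw [heq]
  refine hd.congr_deriv ?_
  simp [Complex.mul_re]
  ring

theorem stmt_12 {N : ℕ} (H : ℝ → Matrix (Fin N) (Fin N) ℂ)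
    (hherm : ∀ l, (H l).IsHermitian)
    (HT : ℝ → Matrix (Fin N) (Fin N) ℂ)
    (hHT : ∀ l, HT l = Matrix.diagonal fun n => H l n n)
    (hderiv : ∀ l, HasDerivAt H
      ((HT l * H l - H l * HT l) * H l - H l * (HT l * H l - H l * HT l)) l) :
    ∀ l, HasDerivAt (fun s => ∑ n, ∑ m, if n ≠ m then ‖H s n m‖ ^ 2 else 0)
        (-2 * ∑ n, ∑ m, ((H l n n).re - (H l m m).re) ^ 2 * ‖H l n m‖ ^ 2) l ∧
      -2 * ∑ n, ∑ m, ((H l n n).re - (H l m m).re) ^ 2 * ‖H l n m‖ ^ 2 ≤ 0 := by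
  intro l
  have hd := hderiv l
  have hT := hHT l
  have hherm' := hherm l
  set c : Matrix (Fin N) (Fin N) ℂ := H l with hc
  set A : Matrix (Fin N) (Fin N) ℂ := HT l * c - c * HT l with hA
  set D : Matrix (Fin N) (Fin N) ℂ := A * c - c * A with hD
  -- hd : HasDerivAt H D l
  have hHc : ∀ n m, (starRingEnd ℂ) (c m n) = c n m := by
    intro n m
    have := congrFun (congrFun hherm' n) m
    simpa [Matrix.conjTranspose_apply] using this
  have hreal : ∀ n, c n n = (((c n n).re : ℝ) : ℂ) := by
    intro n
    exact (Complex.conj_eq_iff_re.mp (hHc n n)).symm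
  have hssymm : ∀ a b : Fin N, ‖c b a‖ = ‖c a b‖ := by
    intro a b
    rw [← hHc b a]
    exact RCLike.norm_conj _
  have hAapp : ∀ n m, A n m = (c n n - c m m) * c n m := by
    intro n m
    rw [hA, hT]
    simp [Matrix.sub_apply, Matrix.diagonal_mul, Matrix.mul_diagonal, ← hc]
    ring
  have hDdiag : ∀ n, D n n = ∑ k, 2 * (c n n - c k k) * (c n k * c k n) := by
    intro n
    rw [hD]
    simp only [Matrix.sub_apply, Matrix.mul_apply, ← Finset.sum_sub_distrib]
    refine Finset.sum_congr rfl fun k _ => ?_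
    rw [hAapp n k, hAapp k n]
    ring
  have hzz : ∀ n k : Fin N, c n k * c k n = ((‖c n k‖ ^ 2 : ℝ) : ℂ) := by
    intro n k
    rw [← hHc k n, Complex.mul_conj]
    norm_cast
    rw [← Complex.sq_norm]
  -- per-n evaluation of the diagonal derivative term
  have key : ∀ n : Fin N, 2 * ((starRingEnd ℂ) (c n n) * D n n).re
      = ∑ k, 4 * (c n n).re * ((c n n).re - (c k k).re) * ‖c n k‖ ^ 2 := by
    intro n
    rw [hDdiag n, hHc n n, Finset.mul_sum, Complex.re_sum, Finset.mul_sum]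
    refine Finset.sum_congr rfl fun k _ => ?_
    rw [hzz n k, hreal n, hreal k]
    rw [show (((c n n).re : ℂ) * (2 * (((c n n).re : ℂ) - ((c k k).re : ℂ)) * ((‖c n k‖ ^ 2 : ℝ) : ℂ)))
        = (((2 * (c n n).re * ((c n n).re - (c k k).re) * ‖c n k‖ ^ 2 : ℝ)) : ℂ) by push_cast; ring]
    simp only [Complex.ofReal_re]
    ring
  -- antisymmetric double sum vanishes
  have hzero : ∑ n : Fin N, ∑ k : Fin N, ((c n n).re ^ 2 - (c k k).re ^ 2) * ‖c n k‖ ^ 2 = 0 := by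
    have h1 : ∑ n : Fin N, ∑ k : Fin N, ((c n n).re ^ 2 - (c k k).re ^ 2) * ‖c n k‖ ^ 2
        = ∑ n : Fin N, ∑ k : Fin N, -(((c n n).re ^ 2 - (c k k).re ^ 2) * ‖c n k‖ ^ 2) := by
      rw [Finset.sum_comm]
      refine Finset.sum_congr rfl fun n _ => Finset.sum_congr rfl fun k _ => ?_
      rw [hssymm n k]
      ring
    simp only [Finset.sum_neg_distrib] at h1
    linarith
  -- value of the diagonal-part derivative
  have hHval : ∑ n : Fin N, 2 * ((starRingEnd ℂ) (c n n) * D n n).re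
      = 2 * ∑ n : Fin N, ∑ m : Fin N, ((c n n).re - (c m m).re) ^ 2 * ‖c n m‖ ^ 2 := by
    calc ∑ n : Fin N, 2 * ((starRingEnd ℂ) (c n n) * D n n).re
        = ∑ n : Fin N, ∑ k : Fin N, 4 * (c n n).re * ((c n n).re - (c k k).re) * ‖c n k‖ ^ 2 :=
          Finset.sum_congr rfl fun n _ => key n
      _ = ∑ n : Fin N, ∑ k : Fin N, (2 * (((c n n).re - (c k k).re) ^ 2 * ‖c n k‖ ^ 2)
            + 2 * (((c n n).re ^ 2 - (c k k).re ^ 2) * ‖c n k‖ ^ 2)) := by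
          refine Finset.sum_congr rfl fun n _ => Finset.sum_congr rfl fun k _ => ?_
          ring
      _ = 2 * ∑ n : Fin N, ∑ m : Fin N, ((c n n).re - (c m m).re) ^ 2 * ‖c n m‖ ^ 2 := by
          simp only [Finset.sum_add_distrib, ← Finset.mul_sum]
          rw [hzero]
          ring
  -- value of the full-norm derivative: zero by trace cyclicity
  have htr : Matrix.trace (c * D) = 0 := by
    rw [hD, mul_sub, Matrix.trace_sub, ← mul_assoc, ← mul_assoc, Matrix.trace_mul_cycle]
    exact sub_self _
  have hgval : ∑ n : Fin N, ∑ m : Fin N, 2 * ((starRingEnd ℂ) (c n m) * D n m).re = 0 := by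
    have h2 : ∑ n : Fin N, ∑ m : Fin N, (starRingEnd ℂ) (c n m) * D n m = Matrix.trace (c * D) := by
      have hrw : ∀ n m : Fin N, (starRingEnd ℂ) (c n m) * D n m = c m n * D n m :=
        fun n m => by rw [hHc m n]
      simp only [hrw, Matrix.trace, Matrix.diag_apply, Matrix.mul_apply]
      exact Finset.sum_comm
    calc ∑ n : Fin N, ∑ m : Fin N, 2 * ((starRingEnd ℂ) (c n m) * D n m).re
        = 2 * ((∑ n : Fin N, ∑ m : Fin N, (starRingEnd ℂ) (c n m) * D n m).re) := by
          simp [Complex.re_sum, Finset.mul_sum]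
      _ = 0 := by rw [h2, htr]; simp
  -- derivatives
  have hnorm : ∀ n m : Fin N, HasDerivAt (fun s => ‖H s n m‖ ^ 2)
      (2 * ((starRingEnd ℂ) (c n m) * D n m).re) l :=
    fun n m => normsq_hasDerivAt' (entry_hasDerivAt' hd n m)
  have hg : HasDerivAt (fun s => ∑ n : Fin N, ∑ m : Fin N, ‖H s n m‖ ^ 2)
      (∑ n : Fin N, ∑ m : Fin N, 2 * ((starRingEnd ℂ) (c n m) * D n m).re) l :=
    HasDerivAt.fun_sum fun n _ => HasDerivAt.fun_sum fun m _ => hnorm n m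
  have hh : HasDerivAt (fun s => ∑ n : Fin N, ‖H s n n‖ ^ 2)
      (∑ n : Fin N, 2 * ((starRingEnd ℂ) (c n n) * D n n).re) l :=
    HasDerivAt.fun_sum fun n _ => hnorm n n
  have hsub := hg.fun_sub hh
  have hfun : (fun s => (∑ n : Fin N, ∑ m : Fin N, ‖H s n m‖ ^ 2) - ∑ n : Fin N, ‖H s n n‖ ^ 2)
      = fun s => ∑ n : Fin N, ∑ m : Fin N, if n ≠ m then ‖H s n m‖ ^ 2 else 0 := by
    funext s
    rw [← Finset.sum_sub_distrib]
    refine Finset.sum_congr rfl fun n _ => ?_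
    have hsplit : ∑ m : Fin N, ‖H s n m‖ ^ 2
        = (∑ m : Fin N, if n ≠ m then ‖H s n m‖ ^ 2 else 0)
          + ∑ m : Fin N, if n = m then ‖H s n m‖ ^ 2 else 0 := by
      rw [← Finset.sum_add_distrib]
      refine Finset.sum_congr rfl fun m _ => ?_
      by_cases h : n = m <;> simp [h]
    rw [hsplit, Finset.sum_ite_eq]
    simp
  rw [hfun] at hsub
  constructor
  · refine hsub.congr_deriv ?_
    rw [hgval, hHval]
    ring
  · have hpos : 0 ≤ ∑ n : Fin N, ∑ m : Fin N, ((c n n).re - (c m m).re) ^ 2 * ‖c n m‖ ^ 2 :=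
      Finset.sum_nonneg fun n _ => Finset.sum_nonneg fun m _ => by positivity
    linarith
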